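/- Every finite partial order embeds into (W, ≤_W), the order of finite prefix-antichains of binary words. -/

import Mathlib

/-- A finite set of binary words is an antichain w.r.t. the prefix order. -/
def IsAntichainW (A : Finset (List Bool)) : Prop :=
  ∀ w ∈ A, ∀ w' ∈ A, w' <+: w → w = w'

/-- `A ≤_W B` iff every word of `A` has a prefix in `B`. -/
def WleW (A B : Finset (List Bool)) : Prop :=
  ∀ w ∈ A, ∃ w' ∈ B, w' <+: w

/-- Every finite partial order embeds into `(W, ≤_W)`. -/
theorem wleW_finite_universal (P : Type) [PartialOrder P] [Fintype P] :
    ∃ φ : P → Finset (List Bool),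
      (∀ x, IsAntichainW (φ x)) ∧ Function.Injective φ ∧
      (∀ x y, x ≤ y ↔ WleW (φ x) (φ y)) := by
  classical
  set n := Fintype.card P with hn
  let e : P ≃ Fin n := Fintype.equivFin P
  let w : P → List Bool := fun y => List.ofFn (fun i : Fin n => decide (i = e y))
  have hwlen : ∀ y, (w y).length = n := fun y => List.length_ofFn
  have hwinj : Function.Injective w := by
    intro a b hab
    have h := congrArg (fun l => l[(e a : ℕ)]?) hab
    simp [w] at h
    exact h
  have hpre : ∀ a b : P, w a <+: w b → a = b := by
    intro a b h
    have := h.eq_of_length (by rw [hwlen, hwlen])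
    exact hwinj this
  refine ⟨fun x => (Finset.univ.filter (· ≤ x)).image w, ?_, ?_, ?_⟩
  · intro x u hu v hv hpv
    simp only [Finset.mem_image, Finset.mem_filter] at hu hv
    obtain ⟨a, _, rfl⟩ := hu
    obtain ⟨b, _, rfl⟩ := hv
    exact congrArg w (hpre b a hpv).symm
  · -- injectivity: derive from the order iff below; do it directly
    have key : ∀ x y : P, x ≤ y ↔
        WleW ((Finset.univ.filter (· ≤ x)).image w) ((Finset.univ.filter (· ≤ y)).image w) := by
      intro x y
      constructor
      · intro hxy u hu
        simp only [Finset.mem_image, Finset.mem_filter] at hu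
        obtain ⟨a, ⟨_, ha⟩, rfl⟩ := hu
        exact ⟨w a, Finset.mem_image_of_mem w (Finset.mem_filter.2 ⟨Finset.mem_univ a, ha.trans hxy⟩),
          List.prefix_refl _⟩
      · intro h
        have hx : w x ∈ (Finset.univ.filter (· ≤ x)).image w :=
          Finset.mem_image_of_mem w (Finset.mem_filter.2 ⟨Finset.mem_univ x, le_refl x⟩)
        obtain ⟨v, hv, hpv⟩ := h (w x) hx
        simp only [Finset.mem_image, Finset.mem_filter] at hv
        obtain ⟨b, ⟨_, hb⟩, rfl⟩ := hv
        have := hpre b x hpv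
        subst this
        exact hb
    intro a b hab
    simp only at hab
    have h1 : a ≤ b := (key a b).2 (by rw [hab]; intro u hu; exact ⟨u, hu, List.prefix_refl _⟩)
    have h2 : b ≤ a := (key b a).2 (by rw [hab]; intro u hu; exact ⟨u, hu, List.prefix_refl _⟩)
    exact le_antisymm h1 h2
  · intro x y
    constructor
    · intro hxy u hu
      simp only [Finset.mem_image, Finset.mem_filter] at hu
      obtain ⟨a, ⟨_, ha⟩, rfl⟩ := hu
      exact ⟨w a, Finset.mem_image_of_mem w (Finset.mem_filter.2 ⟨Finset.mem_univ a, ha.trans hxy⟩),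
        List.prefix_refl _⟩
    · intro h
      have hx : w x ∈ (Finset.univ.filter (· ≤ x)).image w :=
        Finset.mem_image_of_mem w (Finset.mem_filter.2 ⟨Finset.mem_univ x, le_refl x⟩)
      obtain ⟨v, hv, hpv⟩ := h (w x) hx
      simp only [Finset.mem_image, Finset.mem_filter] at hv
      obtain ⟨b, ⟨_, hb⟩, rfl⟩ := hv
      have := hpre b x hpv
      subst this
      exact hb
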